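/- Let d be an odd integer with gcd(d,ab)=1, with prime factorization d = ∏ p_i^{e_i}. If there exists an integer N such that N ≡ ord_{p_j^{e_j}}(a·b⁻¹)/2 (mod ord_{p_j^{e_j}}(a·b⁻¹)) for all j (in particular each such order is even), then ν₂(ord_{p_i}(a·b⁻¹)) is the same for all primes p_i dividing d. -/

import Mathlib

/-- The 2-adic valuation of the order of a unit mod `p` (image of a unit mod `p^e`)
equals that of the order mod `p^e`, for `p` an odd prime. -/
lemma aux_key (p e : ℕ) (hp : p.Prime) (hp2 : p ≠ 2) (he : e ≠ 0)
    (u : (ZMod (p ^ e))ˣ) :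
    padicValNat 2 (orderOf (ZMod.unitsMap (dvd_pow_self p he) u)) =
      padicValNat 2 (orderOf u) := by
  haveI : Fact p.Prime := ⟨hp⟩
  haveI : NeZero (p ^ e) := ⟨pow_ne_zero e hp.pos.ne'⟩
  set π := ZMod.unitsMap (dvd_pow_self p he) with hπ
  set m := orderOf (π u) with hm
  have hmd : m ∣ orderOf u := orderOf_map_dvd π u
  have hmpos : 0 < m := orderOf_pos (π u)
  have hupos : 0 < orderOf u := orderOf_pos u
  -- kernel cardinality
  have hcard : Nat.card (ZMod (p ^ e))ˣ = Nat.card (ZMod p)ˣ * Nat.card π.ker := by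
    rw [Subgroup.card_eq_card_quotient_mul_card_subgroup π.ker,
      Nat.card_congr (QuotientGroup.quotientKerEquivOfSurjective π
        (ZMod.unitsMap_surjective _)).toEquiv]
  have hc1 : Nat.card (ZMod (p ^ e))ˣ = p ^ (e - 1) * (p - 1) := by
    rw [Nat.card_eq_fintype_card, ZMod.card_units_eq_totient,
      Nat.totient_prime_pow hp (Nat.pos_of_ne_zero he)]
  have hc2 : Nat.card (ZMod p)ˣ = p - 1 := by
    rw [Nat.card_eq_fintype_card, ZMod.card_units p]
  have hker : Nat.card π.ker = p ^ (e - 1) := by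
    rw [hc1, hc2] at hcard
    have hp1 : 0 < p - 1 := by have := hp.two_le; omega
    rw [mul_comm (p - 1)] at hcard
    exact (Nat.eq_of_mul_eq_mul_right hp1 hcard.symm)
  -- u ^ m lies in the kernel
  have hmem : u ^ m ∈ π.ker := by
    rw [MonoidHom.mem_ker, map_pow, hm, pow_orderOf_eq_one]
  have hdvdker : orderOf (u ^ m) ∣ p ^ (e - 1) := by
    rw [← hker, ← Subgroup.orderOf_mk (u ^ m) hmem]
    exact orderOf_dvd_natCard _
  have hupow : orderOf (u ^ m) = orderOf u / m := orderOf_pow_of_dvd hmpos.ne' hmd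
  set r := orderOf u / m with hr
  have hrodd : ¬ 2 ∣ r := by
    intro h2
    have : (2 : ℕ) ∣ p ^ (e - 1) := h2.trans (hupow ▸ hdvdker)
    have := (Nat.prime_two.dvd_of_dvd_pow this)
    exact hp2 ((Nat.prime_dvd_prime_iff_eq Nat.prime_two hp).mp this).symm
  have hmr : orderOf u = m * r := (Nat.mul_div_cancel' hmd).symm
  have hrpos : 0 < r := Nat.div_pos (Nat.le_of_dvd hupos hmd) hmpos
  rw [hmr, padicValNat.mul (p := 2) hmpos.ne' hrpos.ne',
    padicValNat.eq_zero_of_not_dvd hrodd, add_zero]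

/-- Arithmetic: if `n` is even positive and `N ≡ n/2 (mod n)` then
`ν₂ n = ν₂ |N| + 1`. -/
lemma aux_arith (n : ℕ) (hn : 0 < n) (heven : Even n) (N : ℤ)
    (h : Int.ModEq (n : ℤ) N ((n / 2 : ℕ) : ℤ)) :
    padicValNat 2 n = padicValNat 2 N.natAbs + 1 := by
  obtain ⟨m, hm⟩ := heven
  have hn2 : n = 2 * m := by omega
  have hmpos : 0 < m := by omega
  have hdiv : (n / 2 : ℕ) = m := by omega
  obtain ⟨k, hk⟩ := h.dvd
  have hNk : N = (m : ℤ) * (1 - 2 * k) := by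
    rw [hdiv] at hk
    have : (n : ℤ) = 2 * m := by exact_mod_cast hn2
    rw [this] at hk
    linarith
  have hodd : Odd (1 - 2 * k : ℤ) := ⟨-k, by ring⟩
  have hna : N.natAbs = m * (1 - 2 * k).natAbs := by
    rw [hNk, Int.natAbs_mul, Int.natAbs_natCast]
  have hoddn : Odd (1 - 2 * k).natAbs := Int.natAbs_odd.mpr hodd
  have htne : (1 - 2 * k).natAbs ≠ 0 := by
    intro h0; rw [h0] at hoddn; exact (Nat.not_odd_iff_even.mpr Even.zero) hoddn
  have h2 : ¬ 2 ∣ (1 - 2 * k).natAbs := by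
    rcases hoddn with ⟨j, hj⟩; omega
  have hA : padicValNat 2 N.natAbs = padicValNat 2 m := by
    rw [hna, padicValNat.mul (p := 2) hmpos.ne' htne,
      padicValNat.eq_zero_of_not_dvd h2, add_zero]
  have hB : padicValNat 2 n = padicValNat 2 m + 1 := by
    rw [hn2, padicValNat.mul (p := 2) two_ne_zero hmpos.ne',
      padicValNat.self one_lt_two, add_comm]
  rw [hA, hB]

/-- For each prime `p ∣ d`, `ν₂(ord_p(ab⁻¹)) = ν₂(|N|) + 1`. -/
lemma aux_main (a b : ℤ) (d : ℕ) (hd : Odd d) (hdab : IsCoprime (d : ℤ) (a * b))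
    (N : ℤ) (p : ℕ) (hp : p ∈ d.primeFactors)
    (hNp : Even (orderOf ((a : ZMod (p ^ (d.factorization p))) *
          (b : ZMod (p ^ (d.factorization p)))⁻¹)) ∧
      Int.ModEq
        ((orderOf ((a : ZMod (p ^ (d.factorization p))) *
            (b : ZMod (p ^ (d.factorization p)))⁻¹) : ℤ))
        N
        (((orderOf ((a : ZMod (p ^ (d.factorization p))) *
            (b : ZMod (p ^ (d.factorization p)))⁻¹) / 2 : ℕ) : ℤ))) :
    padicValNat 2 (orderOf ((a : ZMod p) * (b : ZMod p)⁻¹)) =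
      padicValNat 2 N.natAbs + 1 := by
  have hpp : p.Prime := Nat.prime_of_mem_primeFactors hp
  haveI : Fact p.Prime := ⟨hpp⟩
  have hpd : p ∣ d := Nat.dvd_of_mem_primeFactors hp
  have hdne : d ≠ 0 := by rintro rfl; simpa using hd
  set e := d.factorization p with he
  have hepos : e ≠ 0 := by
    have := (Nat.Prime.factorization_pos_of_dvd hpp hdne hpd)
    omega
  haveI : NeZero (p ^ e) := ⟨pow_ne_zero e hpp.pos.ne'⟩
  have hp2 : p ≠ 2 := by
    rintro rfl
    rw [Nat.odd_iff] at hd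
    omega
  -- coprimality of a and b with p^e
  have hped : ((p : ℤ) ^ e) ∣ (d : ℤ) := by exact_mod_cast Nat.ordProj_dvd d p
  have hcop : IsCoprime ((p : ℤ) ^ e) (a * b) :=
    hdab.of_isCoprime_of_dvd_left hped
  have hca : IsCoprime ((p : ℤ) ^ e) a :=
    hcop.of_isCoprime_of_dvd_right ⟨b, rfl⟩
  have hcb : IsCoprime ((p : ℤ) ^ e) b :=
    hcop.of_isCoprime_of_dvd_right ⟨a, mul_comm a b⟩
  -- a, b are units mod p^e
  have mkUnit : ∀ x : ℤ, IsCoprime ((p : ℤ) ^ e) x → IsUnit (x : ZMod (p ^ e)) := by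
    intro x hx
    obtain ⟨u, v, huv⟩ := hx
    apply IsUnit.of_mul_eq_one (a := (x : ZMod (p ^ e))) (v : ZMod (p ^ e))
    have h0 : ((u * p ^ e + v * x : ℤ) : ZMod (p ^ e)) = 1 := by rw [huv]; norm_cast
    push_cast at h0
    have hz : ((p : ZMod (p ^ e))) ^ e = 0 := by
      rw [← Nat.cast_pow, ZMod.natCast_self]
    rw [hz, mul_zero, zero_add, mul_comm] at h0
    exact h0
  obtain ⟨ua, hua⟩ := mkUnit a hca
  obtain ⟨ub, hub⟩ := mkUnit b hcb
  set u : (ZMod (p ^ e))ˣ := ua * ub⁻¹ with hu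
  have hux : (u : ZMod (p ^ e)) = (a : ZMod (p ^ e)) * (b : ZMod (p ^ e))⁻¹ := by
    rw [hu, Units.val_mul, hua, ← hub, ZMod.inv_coe_unit]
  -- order mod p^e
  have hord1 : orderOf ((a : ZMod (p ^ e)) * (b : ZMod (p ^ e))⁻¹) = orderOf u := by
    rw [← hux, orderOf_units]
  -- image under unitsMap
  set π := ZMod.unitsMap (dvd_pow_self p hepos) with hπ
  have himg : ((π u : (ZMod p)ˣ) : ZMod p) = (a : ZMod p) * (b : ZMod p)⁻¹ := by
    have h1 : ((π ua : (ZMod p)ˣ) : ZMod p) = (a : ZMod p) := by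
      rw [hπ, ZMod.unitsMap_def]
      simp [hua]
    have h2 : ((π ub : (ZMod p)ˣ) : ZMod p) = (b : ZMod p) := by
      rw [hπ, ZMod.unitsMap_def]
      simp [hub]
    rw [hu, map_mul, map_inv, Units.val_mul, h1, ← ZMod.inv_coe_unit, h2]
  have hord2 : orderOf ((a : ZMod p) * (b : ZMod p)⁻¹) = orderOf (π u) := by
    rw [← himg, orderOf_units]
  -- combine
  have hkey := aux_key p e hpp hp2 hepos u
  rw [hord2, ← hπ] at *
  rw [hkey, ← hord1]
  have hpos : 0 < orderOf ((a : ZMod (p ^ e)) * (b : ZMod (p ^ e))⁻¹) := by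
    rw [hord1]; exact orderOf_pos u
  exact aux_arith _ hpos hNp.1 N hNp.2

/-- if for an odd `d` coprime to `ab` there is an integer `N` with
`N ≡ ord_{p^e}(a·b⁻¹)/2 (mod ord_{p^e}(a·b⁻¹))` for every maximal prime power
`p^e ∥ d` (each such order being even), then `ν₂(ord_p(a·b⁻¹))` is the same for
all primes `p ∣ d`. -/
theorem stmt_5 (a b : ℤ) (ha : a ≠ 0) (hb : b ≠ 0) (hab : IsCoprime a b)
    (d : ℕ) (hd : Odd d) (hdab : IsCoprime (d : ℤ) (a * b))
    (N : ℤ)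
    (hN : ∀ p ∈ d.primeFactors,
      Even (orderOf ((a : ZMod (p ^ (d.factorization p))) *
          (b : ZMod (p ^ (d.factorization p)))⁻¹)) ∧
      Int.ModEq
        ((orderOf ((a : ZMod (p ^ (d.factorization p))) *
            (b : ZMod (p ^ (d.factorization p)))⁻¹) : ℤ))
        N
        (((orderOf ((a : ZMod (p ^ (d.factorization p))) *
            (b : ZMod (p ^ (d.factorization p)))⁻¹) / 2 : ℕ) : ℤ))) :
    ∀ p ∈ d.primeFactors, ∀ q ∈ d.primeFactors,
      padicValNat 2 (orderOf ((a : ZMod p) * (b : ZMod p)⁻¹)) =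
        padicValNat 2 (orderOf ((a : ZMod q) * (b : ZMod q)⁻¹)) := by
  intro p hp q hq
  rw [aux_main a b d hd hdab N p hp (hN p hp),
    aux_main a b d hd hdab N q hq (hN q hq)]
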